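/- Bounded out-degree model property: if a normal form formula φ is satisfied at world w of a DPL tree-structure M, then there exists a submodel M_w^φ of M (with same events, permissions and interpretation of primitives restricted appropriately) satisfying: (i) every world v of M_w^φ satisfies all formulae in L_w(v), (ii) w, M_w^φ ⊨ φ, and (iii) every world of M_w^φ has at most D_∃(φ) outgoing transitions. -/

import Mathlib

/-- Boolean action terms over a set `A` of primitive actions. -/
inductive ActTerm (A : Type) : Type
  | prim  : A → ActTerm A
  | meet  : ActTerm A → ActTerm A → ActTerm A
  | join  : ActTerm A → ActTerm A → ActTerm A
  | compl : ActTerm A → ActTerm A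
  | empty : ActTerm A
  | univ  : ActTerm A

/-- Formulae of the deontic action logic DPL over primitive actions `A`
    and propositional variables `P`. -/
inductive Form (A P : Type) : Type
  | prop  : P → Form A P
  | neg   : Form A P → Form A P
  | imp   : Form A P → Form A P → Form A P
  | box   : ActTerm A → Form A P → Form A P
  | sperm : ActTerm A → Form A P            -- strong permission P(α)
  | wperm : ActTerm A → Form A P            -- weak permission Pw(α)
  | eq    : ActTerm A → ActTerm A → Form A P

/-- Diamond `⟨α⟩φ := ¬[α]¬φ`. -/
def Form.dia {A P : Type} (α : ActTerm A) (φ : Form A P) : Form A P :=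
  .neg (.box α (.neg φ))

/-- Conjunction. -/
def Form.and {A P : Type} (φ ψ : Form A P) : Form A P := .neg (.imp φ (.neg ψ))

/-- Disjunction. -/
def Form.or {A P : Type} (φ ψ : Form A P) : Form A P := .imp (.neg φ) ψ

/-- Biconditional. -/
def Form.iff {A P : Type} (φ ψ : Form A P) : Form A P := (φ.imp ψ).and (ψ.imp φ)

/-- DPL structures over the vocabulary `⟨A, P⟩` (def. 1 of the paper):
worlds, events, a deterministic event-labeled transition relation,
a permission relation and an interpretation satisfying I.1, I.2, I.3. -/
structure DPLStruct (A P : Type) where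
  W : Type
  E : Type
  nonemptyE : Nonempty E
  R : W → W → E → Prop
  det : ∀ w w' w'' e, R w w' e → R w w'' e → w' = w''
  Perm : W → E → Prop
  Iprop : P → Set W
  Iact : A → Set E
  I1 : ∀ a : A, (Iact a \ ⋃ (b : A) (_ : b ≠ a), Iact b).Subsingleton
  I2 : ∀ (e : E) (a b : A), a ≠ b → e ∈ Iact a → e ∈ Iact b →
        (⋂ (c : A) (_ : e ∈ Iact c), Iact c) = {e}
  I3 : (⋃ a : A, Iact a) = Set.univ

/-- Interpretation of action terms as sets of events. -/
def ActTerm.interp {A P : Type} (M : DPLStruct A P) : ActTerm A → Set M.E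
  | .prim a => M.Iact a
  | .meet α β => α.interp M ∩ β.interp M
  | .join α β => α.interp M ∪ β.interp M
  | .compl α => (α.interp M)ᶜ
  | .empty => ∅
  | .univ => Set.univ

/-- Satisfaction of DPL formulae at a world of a structure. -/
def Sat {A P : Type} (M : DPLStruct A P) : M.W → Form A P → Prop
  | w, .prop p => w ∈ M.Iprop p
  | w, .neg φ => ¬ Sat M w φ
  | w, .imp φ ψ => Sat M w φ → Sat M w ψ
  | w, .box α φ => ∀ e ∈ α.interp M, ∀ w', M.R w w' e → Sat M w' φ
  | w, .sperm α => ∀ e ∈ α.interp M, M.Perm w e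
  | w, .wperm α => ∃ e ∈ α.interp M, M.Perm w e
  | w, .eq α β => α.interp M = β.interp M
/-- Modal degree of a formula (permissions and equations count as degree 0). -/
def Form.deg {A P : Type} : Form A P → ℕ
  | .neg φ => φ.deg
  | .imp φ ψ => max φ.deg ψ.deg
  | .box _ φ => φ.deg + 1
  | _ => 0

/-- Degree-0 literals: propositional variables, deontic predicates,
and their negations. -/
inductive Lit0 {A P : Type} : Form A P → Prop
  | prop (p : P) : Lit0 (.prop p)
  | negprop (p : P) : Lit0 (.neg (.prop p))
  | sperm (α : ActTerm A) : Lit0 (.sperm α)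
  | negsperm (α : ActTerm A) : Lit0 (.neg (.sperm α))
  | wperm (α : ActTerm A) : Lit0 (.wperm α)
  | negwperm (α : ActTerm A) : Lit0 (.neg (.wperm α))

/-- `F₀`: conjunctions of degree-0 literals. -/
inductive NF0 {A P : Type} : Form A P → Prop
  | lit {φ} : Lit0 φ → NF0 φ
  | and {φ ψ} : NF0 φ → NF0 ψ → NF0 (φ.and ψ)

/-- Auxiliary family: `NFAux false n φ` says `φ ∈ Fₙ` (normal form of degree
`n`); `NFAux true n φ` says `φ` is a conjunction of formulae `⟨α⟩ψ` or
`¬⟨α⟩ψ` with `ψ ∈ Fₙ`. -/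
inductive NFAux {A P : Type} : Bool → ℕ → Form A P → Prop
  | zero {φ} : NF0 φ → NFAux false 0 φ
  | dia {n φ} (α : ActTerm A) : NFAux false n φ → NFAux true n (Form.dia α φ)
  | negdia {n φ} (α : ActTerm A) :
      NFAux false n φ → NFAux true n (.neg (Form.dia α φ))
  | conj {n φ ψ} : NFAux true n φ → NFAux true n ψ → NFAux true n (φ.and ψ)
  | lift {n φ} : NFAux true n φ → NFAux false (n + 1) φ
  | withTheta {n θ φ} : NF0 θ → NFAux true n φ → NFAux false (n + 1) (θ.and φ)

/-- Normal form formulae of degree `n`. -/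
def NF {A P : Type} (n : ℕ) (φ : Form A P) : Prop := NFAux false n φ

/-- Renaming of primitive actions along a vocabulary map. -/
def ActTerm.map {A A' : Type} (f : A → A') : ActTerm A → ActTerm A'
  | .prim a => .prim (f a)
  | .meet α β => .meet (α.map f) (β.map f)
  | .join α β => .join (α.map f) (β.map f)
  | .compl α => .compl (α.map f)
  | .empty => .empty
  | .univ => .univ

/-- Renaming of primitive actions in a formula along a vocabulary map. -/
def Form.map {A A' P : Type} (f : A → A') : Form A P → Form A' P
  | .prop p => .prop p
  | .neg φ => .neg (φ.map f)
  | .imp φ ψ => .imp (φ.map f) (ψ.map f)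
  | .box α φ => .box (α.map f) (φ.map f)
  | .sperm α => .sperm (α.map f)
  | .wperm α => .wperm (α.map f)
  | .eq α β => .eq (α.map f) (β.map f)

/-- Negation with simplification of double negations. -/
def Form.simpNeg {A P : Type} : Form A P → Form A P
  | .neg φ => φ
  | φ => .neg φ

/-- The set `SF(φ, k)` of subformulae of a normal form formula at level `k`. -/
def SF {A P : Type} : Form A P → ℕ → Set (Form A P)
  | .neg (.imp φ (.neg ψ)), k => SF φ k ∪ SF ψ k
  | .neg (.neg (.box α (.neg ψ))), 0 => {.neg (.neg (.box α (.neg ψ)))}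
  | .neg (.neg (.box _ (.neg ψ))), k + 1 => Form.simpNeg '' SF ψ k
  | .neg (.box α (.neg ψ)), 0 => {.neg (.box α (.neg ψ))}
  | .neg (.box _ (.neg ψ)), k + 1 => SF ψ k
  | φ, 0 => {φ}
  | _, _ + 1 => ∅

/-- Existential formulae: `Pw(α)`, `¬P(α)` and `⟨α⟩ψ`. -/
inductive Existential {A P : Type} : Form A P → Prop
  | wperm (α : ActTerm A) : Existential (.wperm α)
  | negsperm (α : ActTerm A) : Existential (.neg (.sperm α))
  | dia (α : ActTerm A) (φ : Form A P) : Existential (Form.dia α φ)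

/-- The existential degree `D_∃(φ)`: the maximum, over the levels
`0 ≤ k ≤ d(φ)`, of the number of existential formulae in `SF(φ, k)`. -/
noncomputable def Dexists {A P : Type} (φ : Form A P) : ℕ :=
  (Finset.range (φ.deg + 1)).sup
    fun k => (SF φ k ∩ {ψ | Existential ψ}).ncard

/-- Primitive actions occurring in an action term. -/
def ActTerm.prims {A : Type} [DecidableEq A] : ActTerm A → Finset A
  | .prim a => {a}
  | .meet α β => α.prims ∪ β.prims
  | .join α β => α.prims ∪ β.prims
  | .compl α => α.prims
  | .empty => ∅
  | .univ => ∅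

/-- Primitive actions occurring in a formula (`Pr(φ)`). -/
def Form.prims {A P : Type} [DecidableEq A] : Form A P → Finset A
  | .prop _ => ∅
  | .neg φ => φ.prims
  | .imp φ ψ => φ.prims ∪ ψ.prims
  | .box α φ => α.prims ∪ φ.prims
  | .sperm α => α.prims
  | .wperm α => α.prims
  | .eq α β => α.prims ∪ β.prims

/-- Disjunction of a list of formulae. -/
def bigOr {A P : Type} : List (Form A P) → Form A P
  | [] => .neg (.eq .empty .empty)
  | [φ] => φ
  | φ :: l => φ.or (bigOr l)

/-- Finite labeled paths: `ReachPath M w v l` means `l` is a path of labeled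
transitions from `w` to `v` in `M`. -/
inductive ReachPath {A P : Type} (M : DPLStruct A P) :
    M.W → M.W → List (M.E × M.W) → Prop
  | nil (w : M.W) : ReachPath M w w []
  | cons {w v u : M.W} {e : M.E} {l : List (M.E × M.W)} :
      M.R w v e → ReachPath M v u l → ReachPath M w u ((e, v) :: l)

/-- `M` is a tree rooted at `r`: every world is reached from `r` by a unique
finite path (hence there are no cycles). -/
def IsTreeRooted {A P : Type} (M : DPLStruct A P) (r : M.W) : Prop :=
  ∀ v : M.W, ∃! l : List (M.E × M.W), ReachPath M r v l

/-- `v` is reachable from `w` in exactly `k` steps. -/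
def kReach {A P : Type} (M : DPLStruct A P) (w : M.W) (k : ℕ) (v : M.W) : Prop :=
  ∃ l : List (M.E × M.W), ReachPath M w v l ∧ l.length = k

/-- The labeling `L_w(v)`: the subformulae of `φ` at level `k ≤ d(φ)` that are
true at a world `v` reachable from `w` in `k` steps. -/
def Lbl {A P : Type} (M : DPLStruct A P) (φ : Form A P) (w v : M.W) :
    Set (Form A P) :=
  {ψ | ∃ k ≤ φ.deg, ψ ∈ SF φ k ∧ kReach M w k v ∧ Sat M v ψ}

/-- Restriction of a structure to a sub-relation of its transition relation
(same worlds, events, permissions and interpretation). -/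
def DPLStruct.restrict {A P : Type} (M : DPLStruct A P)
    (R' : M.W → M.W → M.E → Prop)
    (h : ∀ w w' e, R' w w' e → M.R w w' e) : DPLStruct A P :=
  { M with
    R := R'
    det := fun w w' w'' e h1 h2 => M.det w w' w'' e (h _ _ _ h1) (h _ _ _ h2) }

section BoundedOut

open Classical

variable {A P : Type}

/-! ### SF equations -/

lemma SF_and (a b : Form A P) (k : ℕ) : SF (Form.and a b) k = SF a k ∪ SF b k := by
  simp only [Form.and]; cases k <;> rfl

lemma SF_dia_zero (α : ActTerm A) (ρ : Form A P) :
    SF (.neg (.box α (.neg ρ))) 0 = {.neg (.box α (.neg ρ))} := rfl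

lemma SF_dia_succ (α : ActTerm A) (ρ : Form A P) (k : ℕ) :
    SF (.neg (.box α (.neg ρ))) (k+1) = SF ρ k := rfl

lemma SF_negdia_zero (α : ActTerm A) (ρ : Form A P) :
    SF (.neg (.neg (.box α (.neg ρ)))) 0 = {.neg (.neg (.box α (.neg ρ)))} := rfl

lemma SF_negdia_succ (α : ActTerm A) (ρ : Form A P) (k : ℕ) :
    SF (.neg (.neg (.box α (.neg ρ)))) (k+1) = Form.simpNeg '' SF ρ k := rfl

lemma SF_dia_succ' (α : ActTerm A) (ρ : Form A P) (k : ℕ) :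
    SF (Form.dia α ρ) (k+1) = SF ρ k := rfl

lemma SF_dia_zero' (α : ActTerm A) (ρ : Form A P) :
    SF (Form.dia α ρ) 0 = {Form.dia α ρ} := rfl

lemma SF_negdia_succ' (α : ActTerm A) (ρ : Form A P) (k : ℕ) :
    SF (.neg (Form.dia α ρ)) (k+1) = Form.simpNeg '' SF ρ k := rfl

lemma SF_finite (φ : Form A P) (k : ℕ) : (SF φ k).Finite := by
  induction φ, k using SF.induct <;> simp only [SF] <;>
    first
      | exact Set.finite_union.mpr ⟨by assumption, by assumption⟩
      | exact Set.Finite.image _ (by assumption)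
      | exact Set.finite_singleton _
      | exact Set.finite_empty
      | assumption

/-! ### Literals and simpNeg -/

def IsDia (χ : Form A P) : Prop :=
  ∃ (α : ActTerm A) (ρ : Form A P), χ = .neg (.box α (.neg ρ))

lemma lit0_simpNeg {χ : Form A P} (h : Lit0 χ) : Lit0 χ.simpNeg := by
  cases h with
  | prop p => exact .negprop p
  | negprop p => exact .prop p
  | sperm α => exact .negsperm α
  | negsperm α => exact .sperm α
  | wperm α => exact .negwperm α
  | negwperm α => exact .wperm α

lemma SF_lit_zero {θ : Form A P} (h : Lit0 θ) : SF θ 0 = {θ} := by cases h <;> rfl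

lemma SF_lit_succ {θ : Form A P} (h : Lit0 θ) (k : ℕ) : SF θ (k+1) = ∅ := by cases h <;> rfl

lemma NF0_SF {θ : Form A P} (h : NF0 θ) : ∀ k χ, χ ∈ SF θ k → Lit0 χ := by
  induction h with
  | lit l =>
    intro k χ hχ
    cases k with
    | zero => rw [SF_lit_zero l, Set.mem_singleton_iff] at hχ; subst hχ; exact l
    | succ k => rw [SF_lit_succ l] at hχ; exact hχ.elim
  | and h1 h2 ih1 ih2 =>
    intro k χ hχ
    rw [SF_and] at hχ
    rcases hχ with hχ | hχ
    · exact ih1 k χ hχ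
    · exact ih2 k χ hχ

/-! ### simpNeg orbits -/

lemma iter2_dia (α : ActTerm A) (ρ : Form A P) :
    Form.simpNeg^[2] (.neg (.box α (.neg ρ)) : Form A P) = .neg (.box α (.neg ρ)) := rfl

lemma iter2_box (α : ActTerm A) (ρ : Form A P) :
    Form.simpNeg^[2] (.box α (.neg ρ) : Form A P) = .box α (.neg ρ) := rfl

lemma iter_even_dia {t : ℕ} (ht : Even t) (α : ActTerm A) (ρ : Form A P) :
    Form.simpNeg^[t] (.neg (.box α (.neg ρ)) : Form A P) = .neg (.box α (.neg ρ)) := by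
  obtain ⟨s, rfl⟩ := ht
  induction s with
  | zero => rfl
  | succ s ih =>
    rw [show s + 1 + (s + 1) = (s + s) + 2 by omega, Function.iterate_add_apply,
      iter2_dia, ih]

lemma iter_even_box {t : ℕ} (ht : Even t) (α : ActTerm A) (ρ : Form A P) :
    Form.simpNeg^[t] (.box α (.neg ρ) : Form A P) = .box α (.neg ρ) := by
  obtain ⟨s, rfl⟩ := ht
  induction s with
  | zero => rfl
  | succ s ih =>
    rw [show s + 1 + (s + 1) = (s + s) + 2 by omega, Function.iterate_add_apply,
      iter2_box, ih]

lemma iter_odd_dia {t : ℕ} (ht : Odd t) (α : ActTerm A) (ρ : Form A P) :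
    Form.simpNeg^[t] (.neg (.box α (.neg ρ)) : Form A P) = .box α (.neg ρ) := by
  obtain ⟨s, rfl⟩ := ht
  rw [show 2 * s + 1 = (s + s) + 1 by omega, Function.iterate_add_apply]
  exact iter_even_box ⟨s, rfl⟩ α ρ

lemma iter_odd_box {t : ℕ} (ht : Odd t) (α : ActTerm A) (ρ : Form A P) :
    Form.simpNeg^[t] (.box α (.neg ρ) : Form A P) = .neg (.box α (.neg ρ)) := by
  obtain ⟨s, rfl⟩ := ht
  rw [show 2 * s + 1 = (s + s) + 1 by omega, Function.iterate_add_apply]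
  exact iter_even_dia ⟨s, rfl⟩ α ρ

lemma iter_odd_negdia {t : ℕ} (ht : Odd t) (α : ActTerm A) (ρ : Form A P) :
    Form.simpNeg^[t] (.neg (.neg (.box α (.neg ρ))) : Form A P) = .neg (.box α (.neg ρ)) := by
  obtain ⟨s, rfl⟩ := ht
  rw [show 2 * s + 1 = (s + s) + 1 by omega, Function.iterate_add_apply]
  exact iter_even_dia ⟨s, rfl⟩ α ρ

/-! ### restriction basics -/

lemma interp_restrict (M : DPLStruct A P) (R' : M.W → M.W → M.E → Prop)
    (hsub : ∀ w w' e, R' w w' e → M.R w w' e) (α : ActTerm A) :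
    ActTerm.interp (M.restrict R' hsub) α = α.interp M := by
  induction α with
  | prim a => rfl
  | meet α β ih1 ih2 => simp only [ActTerm.interp, ih1, ih2]; rfl
  | join α β ih1 ih2 => simp only [ActTerm.interp, ih1, ih2]; rfl
  | compl α ih => simp only [ActTerm.interp, ih]; rfl
  | empty => rfl
  | univ => rfl

lemma sat_restrict_nf0 {M : DPLStruct A P} {R' : M.W → M.W → M.E → Prop}
    {hsub : ∀ w w' e, R' w w' e → M.R w w' e} {θ : Form A P} (h : NF0 θ)
    (v : M.W) : Sat (M.restrict R' hsub) v θ ↔ Sat M v θ := by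
  induction h with
  | lit l => cases l <;> simp only [Sat, interp_restrict] <;> exact Iff.rfl
  | and h1 h2 ih1 ih2 => simp only [Form.and, Sat, ih1, ih2]

lemma sat_and {M : DPLStruct A P} {v : M.W} {a b : Form A P} :
    Sat M v (a.and b) ↔ Sat M v a ∧ Sat M v b := by
  simp only [Form.and, Sat]; tauto

/-! ### truth transfer -/

lemma transfer {M : DPLStruct A P} {R' : M.W → M.W → M.E → Prop}
    {hsub : ∀ v v' e, R' v v' e → M.R v v' e}
    {φ : Form A P} {depth : M.W → ℕ}
    (hdepth : ∀ v v' e, M.R v v' e → depth v' = depth v + 1)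
    (hwit : ∀ v (α : ActTerm A) (ρ : Form A P),
      (.neg (.box α (.neg ρ)) : Form A P) ∈ SF φ (depth v) →
      Sat M v (.neg (.box α (.neg ρ))) →
      ∃ e v', R' v v' e ∧ e ∈ α.interp M ∧ Sat M v' ρ)
    {b : Bool} {m : ℕ} {ψ : Form A P} (h : NFAux b m ψ) :
    ∀ v : M.W,
      ((∀ j χ, χ ∈ SF ψ j → IsDia χ → χ ∈ SF φ (depth v + j)) →
        Sat M v ψ → Sat (M.restrict R' hsub) v ψ) ∧
      ((∀ j χ, χ ∈ SF ψ j → IsDia χ.simpNeg → χ.simpNeg ∈ SF φ (depth v + j)) →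
        Sat (M.restrict R' hsub) v ψ → Sat M v ψ) := by
  induction h with
  | zero hθ =>
    intro v
    exact ⟨fun _ hs => (sat_restrict_nf0 hθ v).mpr hs,
           fun _ hs => (sat_restrict_nf0 hθ v).mp hs⟩
  | @dia n ρ α h ih =>
    intro v
    constructor
    · intro hDP hs
      have hmem : (.neg (.box α (.neg ρ)) : Form A P) ∈ SF φ (depth v) := by
        have := hDP 0 _ (show (.neg (.box α (.neg ρ)) : Form A P) ∈
          SF (Form.dia α ρ) 0 from rfl) ⟨α, ρ, rfl⟩
        simpa using this
      obtain ⟨e, v', hR', hin, hsρ⟩ := hwit v α ρ hmem hs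
      have hd : depth v' = depth v + 1 := hdepth _ _ _ (hsub _ _ _ hR')
      have hsρ' : Sat (M.restrict R' hsub) v' ρ := by
        refine (ih v').1 (fun j χ hχ hdia => ?_) hsρ
        have h1 := hDP (j+1) χ (by rwa [show SF (Form.dia α ρ) (j+1) = SF ρ j from rfl]) hdia
        rw [hd, show depth v + 1 + j = depth v + (j + 1) by omega]
        exact h1
      intro hbox
      exact hbox e (by rwa [interp_restrict]) v' hR' hsρ'
    · intro hDN hs'
      have hex : ∃ e ∈ α.interp M, ∃ v', R' v v' e ∧ Sat (M.restrict R' hsub) v' ρ := by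
        by_contra hcon
        push_neg at hcon
        exact hs' (fun e he v' hR' hρ =>
          hcon e (by rwa [interp_restrict] at he) v' hR' hρ)
      obtain ⟨e, he, v', hR', hsρ'⟩ := hex
      have hR := hsub _ _ _ hR'
      have hd : depth v' = depth v + 1 := hdepth _ _ _ hR
      have hsρ : Sat M v' ρ := by
        refine (ih v').2 (fun j χ hχ hdia => ?_) hsρ'
        have h1 := hDN (j+1) χ (by rwa [show SF (Form.dia α ρ) (j+1) = SF ρ j from rfl]) hdia
        rw [hd, show depth v + 1 + j = depth v + (j + 1) by omega]
        exact h1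
      intro hbox
      exact hbox e he v' hR hsρ
  | @negdia n ρ α h ih =>
    intro v
    constructor
    · intro hDP hs
      have hboxM : Sat M v (.box α (.neg ρ)) := not_not.mp hs
      intro hnb
      apply hnb
      intro e he v' hR' hρ'
      have hR := hsub _ _ _ hR'
      have hd : depth v' = depth v + 1 := hdepth _ _ _ hR
      have hnρ : ¬ Sat M v' ρ := hboxM e (by rwa [interp_restrict] at he) v' hR
      refine hnρ ((ih v').2 (fun j χ hχ hdia => ?_) hρ')
      have hmem : χ.simpNeg ∈ SF (Form.neg (Form.dia α ρ)) (j+1) := by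
        rw [show SF (Form.neg (Form.dia α ρ)) (j+1) = Form.simpNeg '' SF ρ j from rfl]
        exact ⟨χ, hχ, rfl⟩
      have h1 := hDP (j+1) χ.simpNeg hmem hdia
      rw [hd, show depth v + 1 + j = depth v + (j + 1) by omega]
      exact h1
    · intro hDN hs'
      intro hdiaM
      have hmem : (.neg (.box α (.neg ρ)) : Form A P) ∈ SF φ (depth v) := by
        have := hDN 0 (Form.neg (Form.dia α ρ))
          (show _ ∈ SF (Form.neg (Form.dia α ρ)) 0 from rfl) ⟨α, ρ, rfl⟩
        exact this
      obtain ⟨e, v', hR', hin, hsρ⟩ := hwit v α ρ hmem hdiaM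
      have hd : depth v' = depth v + 1 := hdepth _ _ _ (hsub _ _ _ hR')
      have hsρ' : Sat (M.restrict R' hsub) v' ρ := by
        refine (ih v').1 (fun j χ hχ hdia => ?_) hsρ
        obtain ⟨β, σ, rfl⟩ := hdia
        have hmem2 : (Form.box β (Form.neg σ) : Form A P) ∈
            SF (Form.neg (Form.dia α ρ)) (j+1) := by
          rw [show SF (Form.neg (Form.dia α ρ)) (j+1) = Form.simpNeg '' SF ρ j from rfl]
          exact ⟨_, hχ, rfl⟩
        have h1 := hDN (j+1) (Form.box β (Form.neg σ)) hmem2 ⟨β, σ, rfl⟩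
        rw [hd, show depth v + 1 + j = depth v + (j + 1) by omega]
        exact h1
      exact not_not.mp hs' e (by rwa [interp_restrict]) v' hR' hsρ'
  | @conj n ψ₁ ψ₂ h1 h2 ih1 ih2 =>
    intro v
    constructor
    · intro hDP hs
      rw [sat_and] at hs; refine sat_and.mpr ?_
      exact ⟨(ih1 v).1 (fun j χ hχ hd => hDP j χ (by rw [SF_and]; exact Or.inl hχ) hd) hs.1,
             (ih2 v).1 (fun j χ hχ hd => hDP j χ (by rw [SF_and]; exact Or.inr hχ) hd) hs.2⟩
    · intro hDN hs
      replace hs := sat_and.mp hs; rw [sat_and]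
      exact ⟨(ih1 v).2 (fun j χ hχ hd => hDN j χ (by rw [SF_and]; exact Or.inl hχ) hd) hs.1,
             (ih2 v).2 (fun j χ hχ hd => hDN j χ (by rw [SF_and]; exact Or.inr hχ) hd) hs.2⟩
  | lift h ih => exact ih
  | @withTheta n θ ψ₁ h0 h1 ih =>
    intro v
    constructor
    · intro hDP hs
      rw [sat_and] at hs; refine sat_and.mpr ?_
      exact ⟨(sat_restrict_nf0 h0 v).mpr hs.1,
             (ih v).1 (fun j χ hχ hd => hDP j χ (by rw [SF_and]; exact Or.inr hχ) hd) hs.2⟩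
    · intro hDN hs
      replace hs := sat_and.mp hs; rw [sat_and]
      exact ⟨(sat_restrict_nf0 h0 v).mp hs.1,
             (ih v).2 (fun j χ hχ hd => hDN j χ (by rw [SF_and]; exact Or.inr hχ) hd) hs.2⟩

/-! ### classification of subformulae -/

lemma rep {b : Bool} {m : ℕ} {ψ : Form A P} (h : NFAux b m ψ) :
    ∀ k χ, χ ∈ SF ψ k → Lit0 χ ∨
      ∃ (α : ActTerm A) (ρ : Form A P) (m' : ℕ), NFAux false m' ρ ∧
        ∃ t : ℕ,
          ((χ = Form.simpNeg^[t] (.neg (.box α (.neg ρ))) ∧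
             ∀ j χ', χ' ∈ SF ρ j → Form.simpNeg^[t] χ' ∈ SF ψ (k + 1 + j)) ∨
           (χ = Form.simpNeg^[t] (.neg (.neg (.box α (.neg ρ)))) ∧
             ∀ j χ', χ' ∈ SF ρ j → Form.simpNeg^[t+1] χ' ∈ SF ψ (k + 1 + j))) := by
  induction h with
  | zero h0 => exact fun k χ hχ => Or.inl (NF0_SF h0 k χ hχ)
  | @dia n ρ α h ih =>
    intro k χ hχ
    cases k with
    | zero =>
      right
      refine ⟨α, ρ, n, h, 0, Or.inl ⟨hχ, fun j χ' hχ' => ?_⟩⟩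
      rw [show (0:ℕ) + 1 + j = j + 1 by omega, SF_dia_succ']
      simpa using hχ'
    | succ k =>
      rw [SF_dia_succ'] at hχ
      rcases ih k χ hχ with hl | ⟨α', ρ', m', h', t, hfl⟩
      · exact Or.inl hl
      right
      refine ⟨α', ρ', m', h', t, ?_⟩
      rcases hfl with ⟨heq, hInv⟩ | ⟨heq, hInv⟩
      · refine Or.inl ⟨heq, fun j χ' hχ' => ?_⟩
        rw [show k + 1 + 1 + j = (k + 1 + j) + 1 by omega, SF_dia_succ']
        exact hInv j χ' hχ'
      · refine Or.inr ⟨heq, fun j χ' hχ' => ?_⟩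
        rw [show k + 1 + 1 + j = (k + 1 + j) + 1 by omega, SF_dia_succ']
        exact hInv j χ' hχ'
  | @negdia n ρ α h ih =>
    intro k χ hχ
    cases k with
    | zero =>
      right
      refine ⟨α, ρ, n, h, 0, Or.inr ⟨hχ, fun j χ' hχ' => ?_⟩⟩
      rw [show (0:ℕ) + 1 + j = j + 1 by omega, SF_negdia_succ']
      exact ⟨χ', hχ', rfl⟩
    | succ k =>
      rw [SF_negdia_succ'] at hχ
      obtain ⟨y, hy, rfl⟩ := hχ
      rcases ih k y hy with hl | ⟨α', ρ', m', h', t, hfl⟩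
      · exact Or.inl (lit0_simpNeg hl)
      right
      refine ⟨α', ρ', m', h', t + 1, ?_⟩
      rcases hfl with ⟨heq, hInv⟩ | ⟨heq, hInv⟩
      · refine Or.inl ⟨by rw [Function.iterate_succ_apply', ← heq], fun j χ' hχ' => ?_⟩
        rw [show k + 1 + 1 + j = (k + 1 + j) + 1 by omega, SF_negdia_succ',
          Function.iterate_succ_apply']
        exact ⟨_, hInv j χ' hχ', rfl⟩
      · refine Or.inr ⟨by rw [Function.iterate_succ_apply', ← heq], fun j χ' hχ' => ?_⟩
        rw [show k + 1 + 1 + j = (k + 1 + j) + 1 by omega, SF_negdia_succ',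
          Function.iterate_succ_apply']
        exact ⟨_, hInv j χ' hχ', rfl⟩
  | @conj n ψ₁ ψ₂ h1 h2 ih1 ih2 =>
    intro k χ hχ
    rw [SF_and] at hχ
    rcases hχ with hχ | hχ
    · rcases ih1 k χ hχ with hl | ⟨α', ρ', m', h', t, hfl⟩
      · exact Or.inl hl
      right
      refine ⟨α', ρ', m', h', t, ?_⟩
      rcases hfl with ⟨heq, hInv⟩ | ⟨heq, hInv⟩
      · exact Or.inl ⟨heq, fun j χ' hχ' => by rw [SF_and]; exact Or.inl (hInv j χ' hχ')⟩
      · exact Or.inr ⟨heq, fun j χ' hχ' => by rw [SF_and]; exact Or.inl (hInv j χ' hχ')⟩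
    · rcases ih2 k χ hχ with hl | ⟨α', ρ', m', h', t, hfl⟩
      · exact Or.inl hl
      right
      refine ⟨α', ρ', m', h', t, ?_⟩
      rcases hfl with ⟨heq, hInv⟩ | ⟨heq, hInv⟩
      · exact Or.inl ⟨heq, fun j χ' hχ' => by rw [SF_and]; exact Or.inr (hInv j χ' hχ')⟩
      · exact Or.inr ⟨heq, fun j χ' hχ' => by rw [SF_and]; exact Or.inr (hInv j χ' hχ')⟩
  | lift h ih => exact ih
  | @withTheta n θ ψ₁ h0 h1 ih =>
    intro k χ hχ
    rw [SF_and] at hχ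
    rcases hχ with hχ | hχ
    · exact Or.inl (NF0_SF h0 k χ hχ)
    · rcases ih k χ hχ with hl | ⟨α', ρ', m', h', t, hfl⟩
      · exact Or.inl hl
      right
      refine ⟨α', ρ', m', h', t, ?_⟩
      rcases hfl with ⟨heq, hInv⟩ | ⟨heq, hInv⟩
      · exact Or.inl ⟨heq, fun j χ' hχ' => by rw [SF_and]; exact Or.inr (hInv j χ' hχ')⟩
      · exact Or.inr ⟨heq, fun j χ' hχ' => by rw [SF_and]; exact Or.inr (hInv j χ' hχ')⟩

lemma SF_classify {m : ℕ} {φ : Form A P} (h : NFAux false m φ) (k : ℕ) (χ : Form A P)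
    (hχ : χ ∈ SF φ k) :
    Lit0 χ ∨
    (∃ (α : ActTerm A) (ρ : Form A P) (m' : ℕ), NFAux false m' ρ ∧
      χ = .neg (.box α (.neg ρ)) ∧
      ∀ j χ', χ' ∈ SF ρ j → IsDia χ' → χ' ∈ SF φ (k + 1 + j)) ∨
    (∃ (α : ActTerm A) (ρ : Form A P) (m' : ℕ), NFAux false m' ρ ∧
      (χ = .box α (.neg ρ) ∨ χ = .neg (.neg (.box α (.neg ρ)))) ∧
      ∀ j χ', χ' ∈ SF ρ j → IsDia χ'.simpNeg → χ'.simpNeg ∈ SF φ (k + 1 + j)) := by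
  rcases rep h k χ hχ with hl | ⟨α, ρ, m', h', t, hfl⟩
  · exact Or.inl hl
  have claimE : ∀ s : ℕ, Even s →
      (∀ j χ', χ' ∈ SF ρ j → Form.simpNeg^[s] χ' ∈ SF φ (k + 1 + j)) →
      ∀ j χ', χ' ∈ SF ρ j → IsDia χ' → χ' ∈ SF φ (k + 1 + j) := by
    rintro s hs hInv j χ' hχ' ⟨β, σ, rfl⟩
    have h1 := hInv j _ hχ'
    rwa [iter_even_dia hs] at h1
  have claimO : ∀ s : ℕ, Odd s →
      (∀ j χ', χ' ∈ SF ρ j → Form.simpNeg^[s] χ' ∈ SF φ (k + 1 + j)) →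
      ∀ j χ', χ' ∈ SF ρ j → IsDia χ'.simpNeg → χ'.simpNeg ∈ SF φ (k + 1 + j) := by
    rintro s hs hInv j χ' hχ' ⟨β, σ, hbs⟩
    have h1 := hInv j χ' hχ'
    cases χ' with
    | neg u =>
      have hu : u = Form.neg (Form.box β (Form.neg σ)) := hbs
      subst hu
      rw [iter_odd_negdia hs] at h1
      exact hbs ▸ h1
    | box γ u =>
      have hbs' : Form.neg (Form.box γ u) = Form.neg (Form.box β (Form.neg σ)) := hbs
      rw [Form.neg.injEq, Form.box.injEq] at hbs'
      obtain ⟨rfl, rfl⟩ := hbs'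
      rw [iter_odd_box hs] at h1
      exact hbs ▸ h1
    | prop p => exact absurd (show Form.neg (Form.prop p) = _ from hbs) (by simp)
    | imp a c => exact absurd (show Form.neg (Form.imp a c) = _ from hbs) (by simp)
    | sperm β' => exact absurd (show Form.neg (Form.sperm β') = _ from hbs) (by simp)
    | wperm β' => exact absurd (show Form.neg (Form.wperm β') = _ from hbs) (by simp)
    | eq β' γ' => exact absurd (show Form.neg (Form.eq β' γ') = _ from hbs) (by simp)
  rcases hfl with ⟨heq, hInv⟩ | ⟨heq, hInv⟩
  · rcases Nat.even_or_odd t with ht | ht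
    · rw [iter_even_dia ht] at heq
      exact Or.inr (Or.inl ⟨α, ρ, m', h', heq, claimE t ht hInv⟩)
    · rw [iter_odd_dia ht] at heq
      exact Or.inr (Or.inr ⟨α, ρ, m', h', Or.inl heq, claimO t ht hInv⟩)
  · cases t with
    | zero =>
      simp only [Function.iterate_zero_apply] at heq
      exact Or.inr (Or.inr ⟨α, ρ, m', h', Or.inr heq,
        claimO 1 odd_one (by simpa using hInv)⟩)
    | succ s =>
      rw [Function.iterate_succ_apply] at heq
      have hfneg : Form.simpNeg (Form.neg (Form.neg (Form.box α (Form.neg ρ)))) =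
          Form.neg (Form.box α (Form.neg ρ)) := rfl
      rw [hfneg] at heq
      have hInv' : ∀ j χ', χ' ∈ SF ρ j → Form.simpNeg^[s+2] χ' ∈ SF φ (k + 1 + j) := by
        intro j χ' hχ'
        have := hInv j χ' hχ'
        rwa [show s + 1 + 1 = s + 2 by omega] at this
      rcases Nat.even_or_odd s with hs | hs
      · rw [iter_even_dia hs] at heq
        refine Or.inr (Or.inl ⟨α, ρ, m', h', heq, claimE (s+2) (by
          obtain ⟨c, rfl⟩ := hs; exact ⟨c+1, by omega⟩) hInv'⟩)
      · rw [iter_odd_dia hs] at heq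
        refine Or.inr (Or.inr ⟨α, ρ, m', h', Or.inl heq, claimO (s+2) (by
          obtain ⟨c, rfl⟩ := hs; exact ⟨c+1, by omega⟩) hInv'⟩)

lemma SF_empty : ∀ (ψ : Form A P) (k : ℕ), ψ.deg < k → SF ψ k = ∅ := by
  intro ψ k
  induction ψ, k using SF.induct <;> intro h <;>
    first
      | exact absurd h (by omega)
      | rfl
      | skip
  case case1 a b k iha ihb =>
    have hd : a.deg < k ∧ b.deg < k := by simp [Form.deg] at h; omega
    have hu : SF (.neg (.imp a (.neg b))) k = SF a k ∪ SF b k := by cases k <;> rfl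
    rw [hu]
    rw [show SF a k = ∅ from by first | exact iha hd.1 | exact ihb hd.1,
        show SF b k = ∅ from by first | exact iha hd.2 | exact ihb hd.2]
    simp
  case case3 a ψ k ih =>
    have hd : ψ.deg < k := by simp [Form.deg] at h; omega
    rw [SF_negdia_succ, ih hd]
    simp
  case case5 a ψ k ih =>
    rw [SF_dia_succ]
    exact ih (by simp [Form.deg] at h; omega)
  case case7 t n h1 h2 h3 =>
    rw [SF.eq_def]
    split <;>
      first
        | rfl
        | omega
        | (exact (h1 _ _ rfl).elim)
        | (exact (h2 _ _ rfl).elim)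
        | (exact (h3 _ _ rfl).elim)

theorem bounded_outdegree' {A P : Type} (M : DPLStruct A P) (w : M.W)
    (φ : Form A P) (n : ℕ) (hnf : NF n φ) (htree : IsTreeRooted M w)
    (hsat : Sat M w φ) :
    ∃ (R' : M.W → M.W → M.E → Prop)
      (hsub : ∀ v v' e, R' v v' e → M.R v v' e),
      (∀ v : M.W, (∃ l, ReachPath (M.restrict R' hsub) w v l) →
          ∀ ψ ∈ Lbl M φ w v, Sat (M.restrict R' hsub) v ψ) ∧
      Sat (M.restrict R' hsub) w φ ∧
      (∀ v : M.W, ({p : M.E × M.W | R' v p.2 p.1}).ncard ≤ Dexists φ) := by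
  classical
  have snoc : ∀ {x v : M.W} {l}, ReachPath M x v l → ∀ {v' : M.W} {e}, M.R v v' e →
      ReachPath M x v' (l ++ [(e, v')]) := by
    intro x v l hl
    induction hl with
    | nil x => intro v' e hR; exact ReachPath.cons hR (ReachPath.nil _)
    | cons hR0 hl ih => intro v' e hR; exact ReachPath.cons hR0 (ih hR)
  set depth : M.W → ℕ := fun v => (htree v).choose.length with hdepthdef
  have pthspec : ∀ v : M.W, ReachPath M w v (htree v).choose :=
    fun v => (htree v).choose_spec.1
  have pthuniq : ∀ (v : M.W) l, ReachPath M w v l → l = (htree v).choose :=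
    fun v l h => (htree v).choose_spec.2 l h
  have depth_edge : ∀ (v v' : M.W) (e : M.E), M.R v v' e → depth v' = depth v + 1 := by
    intro v v' e hR
    have h1 := pthuniq v' _ (snoc (pthspec v) hR)
    simp [hdepthdef, ← h1]
  have depth_w : depth w = 0 := by
    have h1 := pthuniq w [] (ReachPath.nil w)
    simp [hdepthdef, ← h1]
  have depth_reach : ∀ (v : M.W) k, kReach M w k v → k = depth v := by
    rintro v k ⟨l, hl, hlen⟩
    rw [pthuniq v l hl] at hlen
    exact hlen.symm
  have good_ex : ∀ (v : M.W) (χ : Form A P),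
      (χ ∈ SF φ (depth v) ∧ ∃ α ρ, χ = Form.dia α ρ ∧ Sat M v χ) →
      ∃ p : M.E × M.W, M.R v p.2 p.1 ∧
        ∀ (α : ActTerm A) (ρ : Form A P), χ = Form.dia α ρ →
          p.1 ∈ α.interp M ∧ Sat M p.2 ρ := by
    rintro v χ ⟨hmem, α, ρ, rfl, hsd⟩
    have hex : ∃ e ∈ α.interp M, ∃ v', M.R v v' e ∧ Sat M v' ρ := by
      by_contra hcon
      push_neg at hcon
      exact hsd fun e he v' hR hρ => hcon e he v' hR hρ
    obtain ⟨e, he, v', hR, hρ⟩ := hex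
    refine ⟨(e, v'), hR, ?_⟩
    intro α' ρ' heq
    simp only [Form.dia, Form.neg.injEq, Form.box.injEq] at heq
    obtain ⟨rfl, rfl⟩ := heq
    exact ⟨he, hρ⟩
  set pick : M.W → Form A P → Option (M.E × M.W) := fun v χ =>
    if h : χ ∈ SF φ (depth v) ∧ ∃ α ρ, χ = Form.dia α ρ ∧ Sat M v χ
    then some (good_ex v χ h).choose else none with hpickdef
  set R' : M.W → M.W → M.E → Prop :=
    fun v v' e => ∃ χ, pick v χ = some (e, v') with hR'def
  have pick_sound : ∀ (v : M.W) (χ : Form A P) (p : M.E × M.W), pick v χ = some p →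
      (χ ∈ SF φ (depth v) ∧ ∃ α ρ, χ = Form.dia α ρ ∧ Sat M v χ) ∧
      M.R v p.2 p.1 ∧
      ∀ (α : ActTerm A) (ρ : Form A P), χ = Form.dia α ρ →
        p.1 ∈ α.interp M ∧ Sat M p.2 ρ := by
    intro v χ p hp
    simp only [hpickdef] at hp
    split at hp
    · next hgood =>
      obtain rfl : (good_ex v χ hgood).choose = p := by
        exact Option.some.inj hp
      exact ⟨hgood, (good_ex v χ hgood).choose_spec⟩
    · exact absurd hp (by simp)
  have hsub : ∀ (v v' : M.W) (e : M.E), R' v v' e → M.R v v' e := by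
    rintro v v' e ⟨χ, hχ⟩
    exact (pick_sound v χ (e, v') hχ).2.1
  have hwit : ∀ (v : M.W) (α : ActTerm A) (ρ : Form A P),
      (.neg (.box α (.neg ρ)) : Form A P) ∈ SF φ (depth v) →
      Sat M v (.neg (.box α (.neg ρ))) →
      ∃ e v', R' v v' e ∧ e ∈ α.interp M ∧ Sat M v' ρ := by
    intro v α ρ hmem hsd
    have hgood : (Form.dia α ρ) ∈ SF φ (depth v) ∧
        ∃ α' ρ', (Form.dia α ρ) = Form.dia α' ρ' ∧ Sat M v (Form.dia α ρ) :=
      ⟨hmem, α, ρ, rfl, hsd⟩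
    obtain ⟨p, hp⟩ : ∃ p, pick v (Form.dia α ρ) = some p := by
      simp only [hpickdef]
      rw [dif_pos hgood]
      exact ⟨_, rfl⟩
    have hs := pick_sound v _ p hp
    refine ⟨p.1, p.2, ⟨Form.dia α ρ, ?_⟩, (hs.2.2 α ρ rfl).1, (hs.2.2 α ρ rfl).2⟩
    rw [Prod.mk.eta]
    exact hp
  refine ⟨R', hsub, ?_, ?_, ?_⟩
  · -- (i)
    intro v _ ψ hψ
    obtain ⟨k, hk, hSF, hreach, hsψ⟩ := hψ
    obtain rfl : k = depth v := depth_reach v k hreach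
    rcases SF_classify hnf (depth v) ψ hSF with hl |
      ⟨α, ρ, m', h', rfl, hdp⟩ | ⟨α, ρ, m', h', hshape, hdn⟩
    · exact (sat_restrict_nf0 (NF0.lit hl) v).mpr hsψ
    · refine (transfer depth_edge hwit (NFAux.dia α h') v).1 ?_ hsψ
      intro j χ' hχ' hd
      cases j with
      | zero =>
        rw [SF_dia_zero', Set.mem_singleton_iff] at hχ'
        subst hχ'
        exact hSF
      | succ j =>
        rw [SF_dia_succ'] at hχ'
        have h2 := hdp j χ' hχ' hd
        rwa [show depth v + (j+1) = depth v + 1 + j by omega]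
    · have hkey : Sat M v (.neg (Form.dia α ρ)) →
          Sat (M.restrict R' hsub) v (.neg (Form.dia α ρ)) := by
        refine (transfer depth_edge hwit (NFAux.negdia α h') v).1 ?_
        intro j χ' hχ' hd
        cases j with
        | zero =>
          rw [show SF (.neg (Form.dia α ρ)) 0 = {(.neg (Form.dia α ρ) : Form A P)} from rfl,
            Set.mem_singleton_iff] at hχ'
          subst hχ'
          obtain ⟨β, σ, hb⟩ := hd
          exact absurd hb (by simp [Form.dia])
        | succ j =>
          rw [SF_negdia_succ'] at hχ'
          obtain ⟨y, hy, rfl⟩ := hχ'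
          have h2 := hdn j y hy hd
          rwa [show depth v + (j+1) = depth v + 1 + j by omega]
      rcases hshape with rfl | rfl
      · have h1 : Sat M v (.neg (Form.dia α ρ)) := fun hnd => hnd hsψ
        exact not_not.mp (hkey h1)
      · exact hkey hsψ
  · -- (ii)
    refine (transfer depth_edge hwit (show NFAux false n φ from hnf) w).1 ?_ hsat
    intro j χ hχ _
    rwa [depth_w, zero_add]
  · -- (iii)
    intro v
    have hset : {p : M.E × M.W | R' v p.2 p.1} = {p | ∃ χ, pick v χ = some p} := by
      ext p
      simp only [hR'def, Set.mem_setOf_eq, Prod.mk.eta]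
    rw [hset]
    have hfin : (SF φ (depth v) ∩ {ψ | Existential ψ}).Finite :=
      (SF_finite φ (depth v)).inter_of_left _
    have hbound : (SF φ (depth v) ∩ {ψ | Existential ψ}).ncard ≤ Dexists φ := by
      by_cases hd : depth v ≤ φ.deg
      · exact Finset.le_sup (f := fun k => (SF φ k ∩ {ψ | Existential ψ}).ncard)
          (Finset.mem_range.mpr (by omega))
      · have h0 : SF φ (depth v) = ∅ := SF_empty φ (depth v) (by omega)
        simp [h0]
    refine le_trans ?_ hbound
    set g : M.E × M.W → Form A P := fun p =>
      if h : ∃ χ, pick v χ = some p then h.choose else .eq .empty .empty with hg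
    have hgp : ∀ p, (∃ χ, pick v χ = some p) → pick v (g p) = some p := by
      intro p hp
      simp only [hg]
      rw [dif_pos hp]
      exact hp.choose_spec
    refine Set.ncard_le_ncard_of_injOn g ?_ ?_ hfin
    · intro p hp
      have h1 := hgp p hp
      have h2 := pick_sound v (g p) p h1
      obtain ⟨hmem, α, ρ, heq, hsd⟩ := h2.1
      refine ⟨hmem, ?_⟩
      show Existential (g p)
      rw [heq]
      exact Existential.dia α ρ
    · intro p1 h1 p2 h2 heq
      have hcmp := hgp p1 h1
      rw [heq] at hcmp
      rw [hgp p2 h2] at hcmp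
      exact (Option.some.inj hcmp).symm

end BoundedOut
/-- Bounded out-degree model property: if a normal form formula `φ` is
satisfied at the root `w` of a tree-structure `M`, then some restriction
`M_w^φ` of `M` to a sub-relation of its transition relation satisfies:
(i) every world of `M_w^φ` (i.e. reachable in it from `w`) satisfies all
formulae of its label `L_w(v)`; (ii) `w, M_w^φ ⊨ φ`; and (iii) every world of
`M_w^φ` has at most `D_∃(φ)` outgoing transitions. -/
theorem bounded_outdegree {A P : Type} (M : DPLStruct A P) (w : M.W)
    (φ : Form A P) (n : ℕ) (hnf : NF n φ) (htree : IsTreeRooted M w)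
    (hsat : Sat M w φ) :
    ∃ (R' : M.W → M.W → M.E → Prop)
      (hsub : ∀ v v' e, R' v v' e → M.R v v' e),
      (∀ v : M.W, (∃ l, ReachPath (M.restrict R' hsub) w v l) →
          ∀ ψ ∈ Lbl M φ w v, Sat (M.restrict R' hsub) v ψ) ∧
      Sat (M.restrict R' hsub) w φ ∧
      (∀ v : M.W, ({p : M.E × M.W | R' v p.2 p.1}).ncard ≤ Dexists φ) := by
  exact bounded_outdegree' M w φ n hnf htree hsat
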